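/- Let A and B be real random variables on a probability space with B > 0 almost surely, satisfying E[exp(λA − λ²B²/2)] ≤ 1 for all λ > 0. Let L : (0,∞) → (0,∞) be a nondecreasing function satisfying L(cy) ≤ 3cL(y) for all c ≥ 1 and y > 0, L(y²) ≤ 3L(y) for all y ≥ 1, and ∫₁^∞ dx/(x·L(x)) = 1/2. Define g(x) = (exp(x²/2)/x)·1_{x ≥ 1}. Then E[ g(A/B) / ( L(A/B) ∨ L(B ∨ 1/B) ) ] ≤ 3 / ∫₀¹ exp(−x²/2) dx. -/

import Mathlib

open MeasureTheory Set

/-- Key algebraic bound on the weight. -/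
lemma stmt5_weight_le (L : ℝ → ℝ)
    (hLpos : ∀ x > (0 : ℝ), 0 < L x)
    (hLmono : ∀ x y : ℝ, 0 < x → x ≤ y → L x ≤ L y)
    (h31 : ∀ c ≥ (1 : ℝ), ∀ y > (0 : ℝ), L (c * y) ≤ 3 * c * L y)
    (h32 : ∀ y ≥ (1 : ℝ), L (y ^ 2) ≤ 3 * L y)
    (x b l : ℝ) (hx : 1 ≤ x) (hb : 0 < b)
    (hl1 : (x - 1) / b < l) (hl2 : l ≤ x / b) :
    l * L (max l l⁻¹) ≤ 3 * x * L (max x (max b b⁻¹)) / b := by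
  set M := max x (max b b⁻¹) with hM
  have hxM : x ≤ M := le_max_left _ _
  have hbM : b ≤ M := le_trans (le_max_left _ _) (le_max_right _ _)
  have hbiM : b⁻¹ ≤ M := le_trans (le_max_right _ _) (le_max_right _ _)
  have hM1 : (1 : ℝ) ≤ M := le_trans hx hxM
  have hMpos : 0 < M := lt_of_lt_of_le one_pos hM1
  have hLM : 0 < L M := hLpos M hMpos
  have hl0 : 0 < l := lt_of_le_of_lt (div_nonneg (by linarith) hb.le) hl1
  have hlxb : l ≤ x * b⁻¹ := by rw [← div_eq_mul_inv]; exact hl2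
  rcases le_total l⁻¹ l with hc | hc
  · -- max is l, and l ≤ M^2
    rw [max_eq_left hc]
    have hlM2 : l ≤ M ^ 2 := by
      calc l ≤ x * b⁻¹ := hlxb
        _ ≤ M * M := mul_le_mul hxM hbiM (inv_nonneg.2 hb.le) hMpos.le
        _ = M ^ 2 := (sq M).symm
    have h1 : L l ≤ L (M ^ 2) := hLmono l (M ^ 2) hl0 hlM2
    have h2 : L (M ^ 2) ≤ 3 * L M := h32 M hM1
    have : l * L l ≤ (x / b) * (3 * L M) := by
      apply mul_le_mul hl2 (le_trans h1 h2) (hLpos l hl0).le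
      positivity
    calc l * L l ≤ (x / b) * (3 * L M) := this
      _ = 3 * x * L M / b := by ring
  · -- max is l⁻¹
    rw [max_eq_right hc]
    rcases le_total 1 (l * b) with hu | hu
    · -- l⁻¹ ≤ b ≤ M
      have hinv : l⁻¹ ≤ b := by
        have h' : l⁻¹ * 1 ≤ l⁻¹ * (l * b) :=
          mul_le_mul_of_nonneg_left hu (inv_nonneg.2 hl0.le)
        rwa [mul_one, inv_mul_cancel_left₀ hl0.ne'] at h'
      have h1 : L l⁻¹ ≤ L M := hLmono _ _ (inv_pos.2 hl0) (le_trans hinv hbM)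
      have h2 : l * L l⁻¹ ≤ (x / b) * L M := by
        apply mul_le_mul hl2 h1 (hLpos _ (inv_pos.2 hl0)).le
        positivity
      have h0 : 0 ≤ x / b * L M := by positivity
      calc l * L l⁻¹ ≤ (x / b) * L M := h2
        _ ≤ 3 * (x / b * L M) := by linarith
        _ = 3 * x * L M / b := by ring
    · -- u = l*b ≤ 1 : use h31 with c = (l*b)⁻¹
      have hlb : 0 < l * b := mul_pos hl0 hb
      have hc1 : (1 : ℝ) ≤ (l * b)⁻¹ := (one_le_inv₀ hlb).2 hu
      have key : L l⁻¹ ≤ 3 * (l * b)⁻¹ * L b := by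
        have h' := h31 ((l * b)⁻¹) hc1 b hb
        rwa [show (l * b)⁻¹ * b = l⁻¹ by field_simp] at h'
      have hLb : L b ≤ L M := hLmono b M hb hbM
      have h0 : 0 ≤ L M * b⁻¹ := by positivity
      have hxx : 1 * (L M * b⁻¹) ≤ x * (L M * b⁻¹) := mul_le_mul_of_nonneg_right hx h0
      calc l * L l⁻¹ ≤ l * (3 * (l * b)⁻¹ * L b) := mul_le_mul_of_nonneg_left key hl0.le
        _ = 3 * b⁻¹ * L b := by field_simp
        _ ≤ 3 * b⁻¹ * L M := by
            apply mul_le_mul_of_nonneg_left hLb; positivity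
        _ = 3 * (1 * (L M * b⁻¹)) := by ring
        _ ≤ 3 * (x * (L M * b⁻¹)) := by linarith
        _ = 3 * x * L M / b := by rw [div_eq_mul_inv]; ring

lemma stmt5_bump (x b : ℝ) (hx : 1 ≤ x) (hb : 0 < b) :
    ∫ l in Set.Ioc ((x - 1) / b) (x / b), Real.exp (-(x - b * l) ^ 2 / 2)
      = (∫ t in Set.Ioc (0 : ℝ) 1, Real.exp (-t ^ 2 / 2)) / b := by
  have ha : (x - 1) / b ≤ x / b := by gcongr; linarith
  rw [← intervalIntegral.integral_of_le ha,
    show (fun l => Real.exp (-(x - b * l) ^ 2 / 2)) = fun l => (fun t => Real.exp (-t ^ 2 / 2)) (x - b * l) from rfl,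
    intervalIntegral.integral_comp_sub_mul (fun t => Real.exp (-t ^ 2 / 2)) hb.ne' x,
    mul_div_cancel₀ _ hb.ne', show x - b * ((x - 1) / b) = 1 by field_simp; ring,
    sub_self, intervalIntegral.integral_of_le zero_le_one, smul_eq_mul,
    inv_mul_eq_div]

lemma stmt5_core (L : ℝ → ℝ)
    (hLpos : ∀ x > (0 : ℝ), 0 < L x)
    (hLmono : ∀ x y : ℝ, 0 < x → x ≤ y → L x ≤ L y)
    (h31 : ∀ c ≥ (1 : ℝ), ∀ y > (0 : ℝ), L (c * y) ≤ 3 * c * L y)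
    (h32 : ∀ y ≥ (1 : ℝ), L (y ^ 2) ≤ 3 * L y)
    (x b : ℝ) (hx : 1 ≤ x) (hb : 0 < b) :
    ENNReal.ofReal (Real.exp (x ^ 2 / 2) *
        (∫ t in Set.Ioc (0 : ℝ) 1, Real.exp (-t ^ 2 / 2)) /
        (3 * x * L (max x (max b b⁻¹)))) ≤
      ∫⁻ l in Set.Ioi (0 : ℝ),
        ENNReal.ofReal (Real.exp (l * (x * b) - l ^ 2 * b ^ 2 / 2)) *
          ENNReal.ofReal ((l * L (max l l⁻¹))⁻¹) := by
  set c0 : ℝ := ∫ t in Set.Ioc (0 : ℝ) 1, Real.exp (-t ^ 2 / 2) with hc0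
  set M := max x (max b b⁻¹) with hM
  have hMpos : 0 < M := lt_of_lt_of_le one_pos (le_trans hx (le_max_left _ _))
  have hLM : 0 < L M := hLpos M hMpos
  have hxpos : 0 < x := lt_of_lt_of_le one_pos hx
  have ha1 : (0 : ℝ) ≤ (x - 1) / b := div_nonneg (by linarith) hb.le
  set C : ℝ := Real.exp (x ^ 2 / 2) * (b / (3 * x * L M)) with hC
  have hCpos : 0 < C := by positivity
  have hx0 : x ≠ 0 := hxpos.ne'
  have hLM0 : L M ≠ 0 := hLM.ne'
  have hb0 : b ≠ 0 := hb.ne'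
  have hsub : Set.Ioc ((x - 1) / b) (x / b) ⊆ Set.Ioi (0 : ℝ) :=
    fun l hl => lt_of_le_of_lt ha1 hl.1
  have hf_cont : Continuous fun l : ℝ => Real.exp (-(x - b * l) ^ 2 / 2) := by
    fun_prop
  have hInt : IntegrableOn (fun l : ℝ => Real.exp (-(x - b * l) ^ 2 / 2))
      (Set.Ioc ((x - 1) / b) (x / b)) := hf_cont.integrableOn_Ioc
  calc ENNReal.ofReal (Real.exp (x ^ 2 / 2) * c0 / (3 * x * L M))
      = ENNReal.ofReal C * ENNReal.ofReal (c0 / b) := by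
        rw [← ENNReal.ofReal_mul hCpos.le]
        congr 1
        rw [show C * (c0 / b)
            = Real.exp (x ^ 2 / 2) * c0 * (b * b⁻¹) / (3 * x * L M) by rw [hC]; ring,
          mul_inv_cancel₀ hb0, mul_one]
    _ = ENNReal.ofReal C *
        ∫⁻ l in Set.Ioc ((x - 1) / b) (x / b),
          ENNReal.ofReal (Real.exp (-(x - b * l) ^ 2 / 2)) := by
        rw [← ofReal_integral_eq_lintegral_ofReal hInt
          (ae_of_all _ fun l => (Real.exp_pos _).le), stmt5_bump x b hx hb]
    _ = ∫⁻ l in Set.Ioc ((x - 1) / b) (x / b),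
          ENNReal.ofReal (C * Real.exp (-(x - b * l) ^ 2 / 2)) := by
        rw [← lintegral_const_mul' _ _ ENNReal.ofReal_ne_top]
        congr 1; funext l
        rw [ENNReal.ofReal_mul hCpos.le]
    _ ≤ ∫⁻ l in Set.Ioc ((x - 1) / b) (x / b),
          ENNReal.ofReal (Real.exp (l * (x * b) - l ^ 2 * b ^ 2 / 2)) *
            ENNReal.ofReal ((l * L (max l l⁻¹))⁻¹) := by
        apply lintegral_mono_ae
        filter_upwards [ae_restrict_mem measurableSet_Ioc] with l hl
        have hl0 : 0 < l := hsub hl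
        have hLl : 0 < L (max l l⁻¹) :=
          hLpos _ (lt_of_lt_of_le hl0 (le_max_left _ _))
        have hw := stmt5_weight_le L hLpos hLmono h31 h32 x b l hx hb hl.1 hl.2
        have hwpos : 0 < l * L (max l l⁻¹) := mul_pos hl0 hLl
        have hinv : b / (3 * x * L M) ≤ (l * L (max l l⁻¹))⁻¹ := by
          have h3 : b / (3 * x * L M) = (3 * x * L M / b)⁻¹ := by
            rw [inv_div]
          rw [h3]
          exact inv_anti₀ hwpos hw
        rw [show l * (x * b) - l ^ 2 * b ^ 2 / 2
            = x ^ 2 / 2 + -(x - b * l) ^ 2 / 2 by ring, Real.exp_add,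
          ← ENNReal.ofReal_mul (by positivity)]
        apply ENNReal.ofReal_le_ofReal
        calc C * Real.exp (-(x - b * l) ^ 2 / 2)
            = (Real.exp (x ^ 2 / 2) * Real.exp (-(x - b * l) ^ 2 / 2)) *
              (b / (3 * x * L M)) := by rw [hC]; ring
          _ ≤ (Real.exp (x ^ 2 / 2) * Real.exp (-(x - b * l) ^ 2 / 2)) *
              (l * L (max l l⁻¹))⁻¹ :=
            mul_le_mul_of_nonneg_left hinv (by positivity)
    _ ≤ ∫⁻ l in Set.Ioi (0 : ℝ),
          ENNReal.ofReal (Real.exp (l * (x * b) - l ^ 2 * b ^ 2 / 2)) *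
            ENNReal.ofReal ((l * L (max l l⁻¹))⁻¹) :=
        lintegral_mono' (Measure.restrict_mono hsub le_rfl) le_rfl

lemma stmt5_mass (L : ℝ → ℝ)
    (hLpos : ∀ x > (0 : ℝ), 0 < L x)
    (h33 : ∫ x in Set.Ioi (1 : ℝ), (x * L x)⁻¹ = 1 / 2) :
    ∫⁻ l in Set.Ioi (0 : ℝ), ENNReal.ofReal ((l * L (max l l⁻¹))⁻¹) = 1 := by
  have hInt : IntegrableOn (fun x : ℝ => (x * L x)⁻¹) (Set.Ioi 1) := by
    by_contra h
    rw [integral_undef h] at h33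
    norm_num at h33
  have hnn : ∀ x ∈ Set.Ioi (1 : ℝ), 0 ≤ (x * L x)⁻¹ := fun x hx =>
    inv_nonneg.2 (mul_nonneg (by linarith [mem_Ioi.1 hx])
      (hLpos x (by linarith [mem_Ioi.1 hx])).le)
  -- part 1 : over Ioi 1
  have part1 : ∫⁻ l in Set.Ioi (1 : ℝ), ENNReal.ofReal ((l * L (max l l⁻¹))⁻¹)
      = ENNReal.ofReal (1 / 2) := by
    have hcongr : ∀ l ∈ Set.Ioi (1 : ℝ),
        ENNReal.ofReal ((l * L (max l l⁻¹))⁻¹) = ENNReal.ofReal ((l * L l)⁻¹) := by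
      intro l hl
      have hl1 : (1 : ℝ) < l := hl
      rw [max_eq_left (le_trans (inv_le_one_of_one_le₀ hl1.le) hl1.le)]
    rw [setLIntegral_congr_fun measurableSet_Ioi hcongr]
    rw [← ofReal_integral_eq_lintegral_ofReal hInt
      ((ae_restrict_iff' measurableSet_Ioi).2 (ae_of_all _ hnn)), h33]
  -- substitution: Ioo 0 1 = inv '' Ioi 1
  have himg : Inv.inv '' Set.Ioi (1 : ℝ) = Set.Ioo (0 : ℝ) 1 := by
    ext y
    constructor
    · rintro ⟨x, hx, rfl⟩
      have : (1 : ℝ) < x := hx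
      exact ⟨inv_pos.2 (by linarith), inv_lt_one_of_one_lt₀ this⟩
    · rintro ⟨hy0, hy1⟩
      exact ⟨y⁻¹, one_lt_inv_iff₀.2 ⟨hy0, hy1⟩, inv_inv y⟩
  -- part 2 : over Ioc 0 1 via change of variables
  have hder : ∀ x ∈ Set.Ioi (1 : ℝ),
      HasDerivWithinAt Inv.inv (-(x ^ 2)⁻¹) (Set.Ioi 1) x := fun x hx =>
    (hasDerivAt_inv (by linarith [mem_Ioi.1 hx] : x ≠ 0)).hasDerivWithinAt
  have hinj : InjOn Inv.inv (Set.Ioi (1 : ℝ)) := inv_injective.injOn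
  have heqg : ∀ x ∈ Set.Ioi (1 : ℝ),
      |(-(x ^ 2)⁻¹)| • (x⁻¹ * L (x⁻¹)⁻¹)⁻¹ = (x * L x)⁻¹ := by
    intro x hx
    have hx1 : (1 : ℝ) < x := hx
    have hxp : (0 : ℝ) < x := by linarith
    have hkey : (x ^ 2)⁻¹ * x = x⁻¹ := by
      field_simp
    rw [smul_eq_mul, inv_inv, abs_neg, abs_inv, abs_pow, abs_of_pos hxp,
      mul_inv x⁻¹, inv_inv, mul_inv x, ← mul_assoc, hkey]
  have hIntg : IntegrableOn (fun l : ℝ => (l * L l⁻¹)⁻¹) (Set.Ioo (0 : ℝ) 1) := by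
    rw [← himg]
    rw [integrableOn_image_iff_integrableOn_abs_deriv_smul measurableSet_Ioi hder hinj]
    exact hInt.congr_fun (fun x hx => (heqg x hx).symm) measurableSet_Ioi
  have hval : ∫ l in Set.Ioo (0 : ℝ) 1, (l * L l⁻¹)⁻¹ = 1 / 2 := by
    rw [← himg, integral_image_eq_integral_abs_deriv_smul measurableSet_Ioi hder hinj,
      ← h33]
    exact setIntegral_congr_fun measurableSet_Ioi heqg
  have part2 : ∫⁻ l in Set.Ioc (0 : ℝ) 1, ENNReal.ofReal ((l * L (max l l⁻¹))⁻¹)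
      = ENNReal.ofReal (1 / 2) := by
    rw [← setLIntegral_congr Ioo_ae_eq_Ioc]
    have hcongr : ∀ l ∈ Set.Ioo (0 : ℝ) 1,
        ENNReal.ofReal ((l * L (max l l⁻¹))⁻¹) = ENNReal.ofReal ((l * L l⁻¹)⁻¹) := by
      intro l hl
      rw [max_eq_right (le_trans hl.2.le (one_le_inv_iff₀.2 ⟨hl.1, hl.2.le⟩))]
    rw [setLIntegral_congr_fun measurableSet_Ioo hcongr]
    rw [← ofReal_integral_eq_lintegral_ofReal hIntg
      ((ae_restrict_iff' measurableSet_Ioo).2 (ae_of_all _ fun l hl =>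
        inv_nonneg.2 (mul_nonneg hl.1.le (hLpos _ (inv_pos.2 hl.1)).le))), hval]
  -- combine
  have hsplit : Set.Ioi (0 : ℝ) = Set.Ioc 0 1 ∪ Set.Ioi 1 :=
    (Set.Ioc_union_Ioi_eq_Ioi zero_le_one).symm
  rw [hsplit, lintegral_union measurableSet_Ioi (Set.Ioc_disjoint_Ioi le_rfl),
    part1, part2, ← ENNReal.ofReal_add (by norm_num) (by norm_num)]
  norm_num

lemma stmt5_c0_pos : 0 < ∫ x in Set.Ioc (0 : ℝ) 1, Real.exp (-x ^ 2 / 2) := by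
  rw [← intervalIntegral.integral_of_le zero_le_one]
  apply intervalIntegral.intervalIntegral_pos_of_pos_on
  · exact (Continuous.intervalIntegrable (by fun_prop) _ _)
  · exact fun x _ => Real.exp_pos _
  · norm_num

/-- Lemma 3.2. -/
theorem stmt_5 {Ω : Type*} {mΩ : MeasurableSpace Ω} {μ : Measure Ω}
    [IsProbabilityMeasure μ]
    (A B : Ω → ℝ) (hA : Measurable A) (hB : Measurable B)
    (hBpos : ∀ᵐ ω ∂μ, 0 < B ω)
    (h14 : ∀ lam : ℝ, 0 < lam →
      ∫⁻ ω, ENNReal.ofReal (Real.exp (lam * A ω - lam ^ 2 * (B ω) ^ 2 / 2)) ∂μ ≤ 1)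
    (L : ℝ → ℝ)
    (hLpos : ∀ x > (0 : ℝ), 0 < L x)
    (hLmono : ∀ x y : ℝ, 0 < x → x ≤ y → L x ≤ L y)
    (h31 : ∀ c ≥ (1 : ℝ), ∀ y > (0 : ℝ), L (c * y) ≤ 3 * c * L y)
    (h32 : ∀ y ≥ (1 : ℝ), L (y ^ 2) ≤ 3 * L y)
    (h33 : ∫ x in Set.Ioi (1 : ℝ), (x * L x)⁻¹ = 1 / 2)
    (g : ℝ → ℝ) (hg : ∀ x, g x = if 1 ≤ x then Real.exp (x ^ 2 / 2) / x else 0) :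
    ∫⁻ ω, ENNReal.ofReal
        (g (A ω / B ω) / max (L (A ω / B ω)) (L (max (B ω) (B ω)⁻¹))) ∂μ ≤
      ENNReal.ofReal (3 / ∫ x in Set.Ioc (0 : ℝ) 1, Real.exp (-x ^ 2 / 2)) := by
  set c0 : ℝ := ∫ x in Set.Ioc (0 : ℝ) 1, Real.exp (-x ^ 2 / 2) with hc0def
  have hc0pos : 0 < c0 := stmt5_c0_pos
  set Lm : ℝ → ℝ := fun t => L (max t 1) with hLmdef
  have hLmMono : Monotone Lm := fun s t hst =>
    hLmono _ _ (lt_of_lt_of_le one_pos (le_max_right _ _)) (max_le_max hst le_rfl)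
  have hLmMeas : Measurable Lm := hLmMono.measurable
  have hmax1 : ∀ l : ℝ, 0 < l → (1 : ℝ) ≤ max l l⁻¹ := by
    intro l hl
    rcases le_total 1 l with h | h
    · exact le_trans h (le_max_left _ _)
    · exact le_trans ((one_le_inv₀ hl).2 h) (le_max_right _ _)
  have hLmL : ∀ l : ℝ, 0 < l → Lm (max l l⁻¹) = L (max l l⁻¹) := by
    intro l hl
    rw [hLmdef]
    simp only
    rw [max_eq_left (hmax1 l hl)]
  set I : Ω → ENNReal := fun ω => ∫⁻ l in Set.Ioi (0 : ℝ),
      ENNReal.ofReal (Real.exp (l * A ω - l ^ 2 * (B ω) ^ 2 / 2)) *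
        ENNReal.ofReal ((l * Lm (max l l⁻¹))⁻¹) with hIdef
  -- Step 1 : pointwise a.e. bound
  have step1 : ∀ᵐ ω ∂μ, ENNReal.ofReal
      (g (A ω / B ω) / max (L (A ω / B ω)) (L (max (B ω) (B ω)⁻¹)))
      ≤ ENNReal.ofReal (3 / c0) * I ω := by
    filter_upwards [hBpos] with ω hb
    by_cases hxge : 1 ≤ A ω / B ω
    · set b : ℝ := B ω with hbdef
      set x : ℝ := A ω / B ω with hxdef
      have hx0 : (0 : ℝ) < x := lt_of_lt_of_le one_pos hxge
      have hm0 : (0 : ℝ) < max b b⁻¹ := lt_of_lt_of_le hb (le_max_left _ _)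
      set M : ℝ := max x (max b b⁻¹) with hMdef
      have hMpos : 0 < M := lt_of_lt_of_le hx0 (le_max_left _ _)
      have hLM : 0 < L M := hLpos M hMpos
      have hA_eq : A ω = x * b := (div_mul_cancel₀ _ hb.ne').symm
      have hden : max (L x) (L (max b b⁻¹)) = L M := by
        rcases le_total x (max b b⁻¹) with h | h
        · rw [hMdef, max_eq_right h, max_eq_right (hLmono x _ hx0 h)]
        · rw [hMdef, max_eq_left h, max_eq_left (hLmono _ _ hm0 h)]
      have hIω : I ω = ∫⁻ l in Set.Ioi (0 : ℝ),
          ENNReal.ofReal (Real.exp (l * (x * b) - l ^ 2 * b ^ 2 / 2)) *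
            ENNReal.ofReal ((l * L (max l l⁻¹))⁻¹) := by
        rw [hIdef]
        apply setLIntegral_congr_fun measurableSet_Ioi
        intro l hl
        beta_reduce
        rw [hLmL l hl, ← hA_eq]
      have hcore := stmt5_core L hLpos hLmono h31 h32 x b hxge hb
      rw [← hc0def] at hcore
      have heq : g x / max (L x) (L (max b b⁻¹))
          = (3 / c0) * (Real.exp (x ^ 2 / 2) * c0 / (3 * x * L M)) := by
        rw [hden, hg, if_pos hxge]
        field_simp
      calc ENNReal.ofReal (g x / max (L x) (L (max b b⁻¹)))
          = ENNReal.ofReal (3 / c0) *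
            ENNReal.ofReal (Real.exp (x ^ 2 / 2) * c0 / (3 * x * L M)) := by
            rw [heq, ENNReal.ofReal_mul (by positivity)]
        _ ≤ ENNReal.ofReal (3 / c0) * I ω := by
            rw [hIω]; exact mul_le_mul_right hcore _
    · rw [hg, if_neg hxge, zero_div, ENNReal.ofReal_zero]
      exact zero_le
  -- Step 2 : Tonelli and h14
  have m1 : Measurable fun p : Ω × ℝ =>
      Real.exp (p.2 * A p.1 - p.2 ^ 2 * (B p.1) ^ 2 / 2) := by
    apply Real.measurable_exp.comp
    exact (measurable_snd.mul (hA.comp measurable_fst)).sub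
      (((measurable_snd.pow_const 2).mul ((hB.comp measurable_fst).pow_const 2)).div_const 2)
  have m2 : Measurable fun p : Ω × ℝ => (p.2 * Lm (max p.2 p.2⁻¹))⁻¹ :=
    (measurable_snd.mul (hLmMeas.comp (measurable_snd.max measurable_snd.inv))).inv
  have hIle : ∫⁻ ω, I ω ∂μ ≤ 1 := by
    have hswap : ∫⁻ ω, I ω ∂μ = ∫⁻ l in Set.Ioi (0 : ℝ), ∫⁻ ω,
        (ENNReal.ofReal (Real.exp (l * A ω - l ^ 2 * (B ω) ^ 2 / 2)) *
          ENNReal.ofReal ((l * Lm (max l l⁻¹))⁻¹)) ∂μ := by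
      rw [hIdef]
      exact lintegral_lintegral_swap (m1.ennreal_ofReal.mul m2.ennreal_ofReal).aemeasurable
    rw [hswap]
    calc ∫⁻ l in Set.Ioi (0 : ℝ), ∫⁻ ω,
        (ENNReal.ofReal (Real.exp (l * A ω - l ^ 2 * (B ω) ^ 2 / 2)) *
          ENNReal.ofReal ((l * Lm (max l l⁻¹))⁻¹)) ∂μ
        ≤ ∫⁻ l in Set.Ioi (0 : ℝ), ENNReal.ofReal ((l * Lm (max l l⁻¹))⁻¹) := by
          apply lintegral_mono_ae
          filter_upwards [ae_restrict_mem measurableSet_Ioi] with l hl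
          rw [lintegral_mul_const' _ _ ENNReal.ofReal_ne_top]
          calc (∫⁻ ω, ENNReal.ofReal (Real.exp (l * A ω - l ^ 2 * (B ω) ^ 2 / 2)) ∂μ) *
              ENNReal.ofReal ((l * Lm (max l l⁻¹))⁻¹)
              ≤ 1 * ENNReal.ofReal ((l * Lm (max l l⁻¹))⁻¹) :=
                mul_le_mul_left (h14 l hl) _
            _ = ENNReal.ofReal ((l * Lm (max l l⁻¹))⁻¹) := one_mul _
      _ = ∫⁻ l in Set.Ioi (0 : ℝ), ENNReal.ofReal ((l * L (max l l⁻¹))⁻¹) :=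
          setLIntegral_congr_fun measurableSet_Ioi
            (fun l hl => by rw [hLmL l hl])
      _ = 1 := stmt5_mass L hLpos h33
  calc ∫⁻ ω, ENNReal.ofReal
        (g (A ω / B ω) / max (L (A ω / B ω)) (L (max (B ω) (B ω)⁻¹))) ∂μ
      ≤ ∫⁻ ω, ENNReal.ofReal (3 / c0) * I ω ∂μ := lintegral_mono_ae step1
    _ = ENNReal.ofReal (3 / c0) * ∫⁻ ω, I ω ∂μ :=
        lintegral_const_mul' _ _ ENNReal.ofReal_ne_top
    _ ≤ ENNReal.ofReal (3 / c0) * 1 := mul_le_mul_right hIle _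
    _ = ENNReal.ofReal (3 / c0) := mul_one _
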